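/- Let γ, γ' ∈ (−1, 1) and λ₁, …, λ₉, λ'₁, …, λ'₉ be real numbers, and let f : ℝ² → ℝ be the polynomial f(x,y) = (1/3)(x − γy²)(x² − y⁴) + λ₁ + λ₂y + λ₃y² + λ₄y³ + λ₅y⁴ + λ₆x + λ₇xy + λ₈xy² + λ₉(x² − 3y⁴)y. Let G : ℝ² → ℝ² be the map G(x,y) = (ax + by + cy² + ξ, dy + η) with a > 0 and d > 0. If (f ∘ G)(x,y) = (1/3)(x − γ'y²)(x² − y⁴) + λ'₁ + λ'₂y + λ'₃y² + λ'₄y³ + λ'₅y⁴ + λ'₆x + λ'₇xy + λ'₈xy² + λ'₉(x² − 3y⁴)y for all (x,y) ∈ ℝ², then a = d = 1 and b = c = ξ = η = 0, i.e. G is the identity map (and consequently γ' = γ and λ'ᵢ = λᵢ for all i). -/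
import Mathlib


/-- The canonical versal deformation of the real singularity class `J₁₀³`:
`(1/3)(x − γy²)(x² − y⁴) + λ₁ + λ₂y + λ₃y² + λ₄y³ + λ₅y⁴ + λ₆x + λ₇xy + λ₈xy²
  + λ₉(x² − 3y⁴)y`. -/
noncomputable def vers3 (γ l1 l2 l3 l4 l5 l6 l7 l8 l9 x y : ℝ) : ℝ :=
  (1 / 3) * (x - γ * y ^ 2) * (x ^ 2 - y ^ 4) + l1 + l2 * y + l3 * y ^ 2 + l4 * y ^ 3 +
      l5 * y ^ 4 + l6 * x + l7 * x * y + l8 * x * y ^ 2 + l9 * (x ^ 2 - 3 * y ^ 4) * y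

set_option maxHeartbeats 1000000 in
/-- If a coordinate change `G(x,y) = (ax + by + cy² + ξ, dy + η)` with `a > 0`, `d > 0`
maps one member of the canonical versal deformation of `J₁₀³` (with `γ, γ' ∈ (−1,1)`)
to another, then `G` is the identity map, and the parameters coincide. -/
theorem vers3_orbit_unique
    (γ l1 l2 l3 l4 l5 l6 l7 l8 l9 : ℝ)
    (γ' l1' l2' l3' l4' l5' l6' l7' l8' l9' : ℝ)
    (hγ : γ ∈ Set.Ioo (-1 : ℝ) 1) (hγ' : γ' ∈ Set.Ioo (-1 : ℝ) 1)
    (a b c d ξ η : ℝ) (ha : 0 < a) (hd : 0 < d)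
    (h : ∀ x y : ℝ,
      vers3 γ l1 l2 l3 l4 l5 l6 l7 l8 l9 (a * x + b * y + c * y ^ 2 + ξ) (d * y + η)
        = vers3 γ' l1' l2' l3' l4' l5' l6' l7' l8' l9' x y) :
    a = 1 ∧ d = 1 ∧ b = 0 ∧ c = 0 ∧ ξ = 0 ∧ η = 0 ∧
      (∀ x y : ℝ, (a * x + b * y + c * y ^ 2 + ξ, d * y + η) = (x, y)) ∧
      γ' = γ ∧ l1' = l1 ∧ l2' = l2 ∧ l3' = l3 ∧ l4' = l4 ∧ l5' = l5 ∧
      l6' = l6 ∧ l7' = l7 ∧ l8' = l8 ∧ l9' = l9 := by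
  simp only [vers3] at h
  have H3 : ∀ y : ℝ, ((-1/3) + (1/3)*a^3) = 0 := by
    intro y
    linear_combination ((1/2) : ℝ) * h 0 y + ((-1/2) : ℝ) * h 1 y + ((-1/6) : ℝ) * h (-1) y + ((1/6) : ℝ) * h 2 y
  have E30 : (-1/3) + (1/3)*a^3 = 0 := by
    linear_combination (1 : ℝ) * H3 0
  have H2 : ∀ y : ℝ, (a^2*η*l9 + (-1/3)*a^2*η^2*γ + a^2*ξ) + (-1*l9' + a^2*d*l9 + (-2/3)*a^2*d*η*γ + a^2*b) * y + ((1/3)*γ' + (-1/3)*a^2*d^2*γ + a^2*c) * y^2 = 0 := by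
    intro y
    linear_combination (-1 : ℝ) * h 0 y + ((1/2) : ℝ) * h 1 y + ((1/2) : ℝ) * h (-1) y
  have E20 : a^2*η*l9 + (-1/3)*a^2*η^2*γ + a^2*ξ = 0 := by
    linear_combination (1 : ℝ) * H2 0
  have E21 : -1*l9' + a^2*d*l9 + (-2/3)*a^2*d*η*γ + a^2*b = 0 := by
    linear_combination ((1/2) : ℝ) * H2 1 + ((-1/2) : ℝ) * H2 (-1)
  have E22 : (1/3)*γ' + (-1/3)*a^2*d^2*γ + a^2*c = 0 := by
    linear_combination (-1 : ℝ) * H2 0 + ((1/2) : ℝ) * H2 1 + ((1/2) : ℝ) * H2 (-1)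
  have H1 : ∀ y : ℝ, (-1*l6' + a*l6 + a*η*l7 + a*η^2*l8 + (-1/3)*a*η^4 + 2*a*ξ*η*l9 + (-2/3)*a*ξ*η^2*γ + a*ξ^2) + (-1*l7' + a*d*l7 + 2*a*d*η*l8 + (-4/3)*a*d*η^3 + 2*a*d*ξ*l9 + (-4/3)*a*d*ξ*η*γ + 2*a*b*η*l9 + (-2/3)*a*b*η^2*γ + 2*a*b*ξ) * y + (-1*l8' + a*d^2*l8 + -2*a*d^2*η^2 + (-2/3)*a*d^2*ξ*γ + 2*a*c*η*l9 + (-2/3)*a*c*η^2*γ + 2*a*c*ξ + 2*a*b*d*l9 + (-4/3)*a*b*d*η*γ + a*b^2) * y^2 + ((-4/3)*a*d^3*η + 2*a*c*d*l9 + (-4/3)*a*c*d*η*γ + (-2/3)*a*b*d^2*γ + 2*a*b*c) * y^3 + ((1/3) + (-1/3)*a*d^4 + (-2/3)*a*c*d^2*γ + a*c^2) * y^4 = 0 := by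
    intro y
    linear_combination ((-1/2) : ℝ) * h 0 y + (1 : ℝ) * h 1 y + ((-1/3) : ℝ) * h (-1) y + ((-1/6) : ℝ) * h 2 y
  have E10 : -1*l6' + a*l6 + a*η*l7 + a*η^2*l8 + (-1/3)*a*η^4 + 2*a*ξ*η*l9 + (-2/3)*a*ξ*η^2*γ + a*ξ^2 = 0 := by
    linear_combination (1 : ℝ) * H1 0
  have E11 : -1*l7' + a*d*l7 + 2*a*d*η*l8 + (-4/3)*a*d*η^3 + 2*a*d*ξ*l9 + (-4/3)*a*d*ξ*η*γ + 2*a*b*η*l9 + (-2/3)*a*b*η^2*γ + 2*a*b*ξ = 0 := by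
    linear_combination ((2/3) : ℝ) * H1 1 + ((-2/3) : ℝ) * H1 (-1) + ((-1/12) : ℝ) * H1 2 + ((1/12) : ℝ) * H1 (-2)
  have E12 : -1*l8' + a*d^2*l8 + -2*a*d^2*η^2 + (-2/3)*a*d^2*ξ*γ + 2*a*c*η*l9 + (-2/3)*a*c*η^2*γ + 2*a*c*ξ + 2*a*b*d*l9 + (-4/3)*a*b*d*η*γ + a*b^2 = 0 := by
    linear_combination ((-5/4) : ℝ) * H1 0 + ((2/3) : ℝ) * H1 1 + ((2/3) : ℝ) * H1 (-1) + ((-1/24) : ℝ) * H1 2 + ((-1/24) : ℝ) * H1 (-2)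
  have E13 : (-4/3)*a*d^3*η + 2*a*c*d*l9 + (-4/3)*a*c*d*η*γ + (-2/3)*a*b*d^2*γ + 2*a*b*c = 0 := by
    linear_combination ((-1/6) : ℝ) * H1 1 + ((1/6) : ℝ) * H1 (-1) + ((1/12) : ℝ) * H1 2 + ((-1/12) : ℝ) * H1 (-2)
  have E14 : (1/3) + (-1/3)*a*d^4 + (-2/3)*a*c*d^2*γ + a*c^2 = 0 := by
    linear_combination ((1/4) : ℝ) * H1 0 + ((-1/6) : ℝ) * H1 1 + ((-1/6) : ℝ) * H1 (-1) + ((1/24) : ℝ) * H1 2 + ((1/24) : ℝ) * H1 (-2)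
  have H0 : ∀ y : ℝ, (-1*l1' + l1 + η*l2 + η^2*l3 + η^3*l4 + η^4*l5 + -3*η^5*l9 + (1/3)*η^6*γ + ξ*l6 + ξ*η*l7 + ξ*η^2*l8 + (-1/3)*ξ*η^4 + ξ^2*η*l9 + (-1/3)*ξ^2*η^2*γ + (1/3)*ξ^3) + (-1*l2' + d*l2 + 2*d*η*l3 + 3*d*η^2*l4 + 4*d*η^3*l5 + -15*d*η^4*l9 + 2*d*η^5*γ + d*ξ*l7 + 2*d*ξ*η*l8 + (-4/3)*d*ξ*η^3 + d*ξ^2*l9 + (-2/3)*d*ξ^2*η*γ + b*l6 + b*η*l7 + b*η^2*l8 + (-1/3)*b*η^4 + 2*b*ξ*η*l9 + (-2/3)*b*ξ*η^2*γ + b*ξ^2) * y + (-1*l3' + d^2*l3 + 3*d^2*η*l4 + 6*d^2*η^2*l5 + -30*d^2*η^3*l9 + 5*d^2*η^4*γ + d^2*ξ*l8 + -2*d^2*ξ*η^2 + (-1/3)*d^2*ξ^2*γ + c*l6 + c*η*l7 + c*η^2*l8 + (-1/3)*c*η^4 + 2*c*ξ*η*l9 + (-2/3)*c*ξ*η^2*γ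 + c*ξ^2 + b*d*l7 + 2*b*d*η*l8 + (-4/3)*b*d*η^3 + 2*b*d*ξ*l9 + (-4/3)*b*d*ξ*η*γ + b^2*η*l9 + (-1/3)*b^2*η^2*γ + b^2*ξ) * y^2 + (-1*l4' + d^3*l4 + 4*d^3*η*l5 + -30*d^3*η^2*l9 + (20/3)*d^3*η^3*γ + (-4/3)*d^3*ξ*η + c*d*l7 + 2*c*d*η*l8 + (-4/3)*c*d*η^3 + 2*c*d*ξ*l9 + (-4/3)*c*d*ξ*η*γ + b*d^2*l8 + -2*b*d^2*η^2 + (-2/3)*b*d^2*ξ*γ + 2*b*c*η*l9 + (-2/3)*b*c*η^2*γ + 2*b*c*ξ + b^2*d*l9 + (-2/3)*b^2*d*η*γ + (1/3)*b^3) * y^3 + (-1*l5' + d^4*l5 + -15*d^4*η*l9 + 5*d^4*η^2*γ + (-1/3)*d^4*ξ + c*d^2*l8 + -2*c*d^2*η^2 + (-2/3)*c*d^2*ξ*γ + c^2*η*l9 + (-1/3)*c^2*η^2*γ + c^2*ξ + (-4/3)*b*d^3*η + 2*b*c*d*l9 + (-4/3)*b*c*d*η*γ + (-1/3)*b^2*d^2*γ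 + b^2*c) * y^4 + (3*l9' + -3*d^5*l9 + 2*d^5*η*γ + (-4/3)*c*d^3*η + c^2*d*l9 + (-2/3)*c^2*d*η*γ + (-1/3)*b*d^4 + (-2/3)*b*c*d^2*γ + b*c^2) * y^5 + ((-1/3)*γ' + (1/3)*d^6*γ + (-1/3)*c*d^4 + (-1/3)*c^2*d^2*γ + (1/3)*c^3) * y^6 = 0 := by
    intro y
    linear_combination (1 : ℝ) * h 0 y
  have E00 : -1*l1' + l1 + η*l2 + η^2*l3 + η^3*l4 + η^4*l5 + -3*η^5*l9 + (1/3)*η^6*γ + ξ*l6 + ξ*η*l7 + ξ*η^2*l8 + (-1/3)*ξ*η^4 + ξ^2*η*l9 + (-1/3)*ξ^2*η^2*γ + (1/3)*ξ^3 = 0 := by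
    linear_combination (1 : ℝ) * H0 0
  have E01 : -1*l2' + d*l2 + 2*d*η*l3 + 3*d*η^2*l4 + 4*d*η^3*l5 + -15*d*η^4*l9 + 2*d*η^5*γ + d*ξ*l7 + 2*d*ξ*η*l8 + (-4/3)*d*ξ*η^3 + d*ξ^2*l9 + (-2/3)*d*ξ^2*η*γ + b*l6 + b*η*l7 + b*η^2*l8 + (-1/3)*b*η^4 + 2*b*ξ*η*l9 + (-2/3)*b*ξ*η^2*γ + b*ξ^2 = 0 := by
    linear_combination ((3/4) : ℝ) * H0 1 + ((-3/4) : ℝ) * H0 (-1) + ((-3/20) : ℝ) * H0 2 + ((3/20) : ℝ) * H0 (-2) + ((1/60) : ℝ) * H0 3 + ((-1/60) : ℝ) * H0 (-3)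
  have E02 : -1*l3' + d^2*l3 + 3*d^2*η*l4 + 6*d^2*η^2*l5 + -30*d^2*η^3*l9 + 5*d^2*η^4*γ + d^2*ξ*l8 + -2*d^2*ξ*η^2 + (-1/3)*d^2*ξ^2*γ + c*l6 + c*η*l7 + c*η^2*l8 + (-1/3)*c*η^4 + 2*c*ξ*η*l9 + (-2/3)*c*ξ*η^2*γ + c*ξ^2 + b*d*l7 + 2*b*d*η*l8 + (-4/3)*b*d*η^3 + 2*b*d*ξ*l9 + (-4/3)*b*d*ξ*η*γ + b^2*η*l9 + (-1/3)*b^2*η^2*γ + b^2*ξ = 0 := by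
    linear_combination ((-49/36) : ℝ) * H0 0 + ((3/4) : ℝ) * H0 1 + ((3/4) : ℝ) * H0 (-1) + ((-3/40) : ℝ) * H0 2 + ((-3/40) : ℝ) * H0 (-2) + ((1/180) : ℝ) * H0 3 + ((1/180) : ℝ) * H0 (-3)
  have E03 : -1*l4' + d^3*l4 + 4*d^3*η*l5 + -30*d^3*η^2*l9 + (20/3)*d^3*η^3*γ + (-4/3)*d^3*ξ*η + c*d*l7 + 2*c*d*η*l8 + (-4/3)*c*d*η^3 + 2*c*d*ξ*l9 + (-4/3)*c*d*ξ*η*γ + b*d^2*l8 + -2*b*d^2*η^2 + (-2/3)*b*d^2*ξ*γ + 2*b*c*η*l9 + (-2/3)*b*c*η^2*γ + 2*b*c*ξ + b^2*d*l9 + (-2/3)*b^2*d*η*γ + (1/3)*b^3 = 0 := by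
    linear_combination ((-13/48) : ℝ) * H0 1 + ((13/48) : ℝ) * H0 (-1) + ((1/6) : ℝ) * H0 2 + ((-1/6) : ℝ) * H0 (-2) + ((-1/48) : ℝ) * H0 3 + ((1/48) : ℝ) * H0 (-3)
  have E04 : -1*l5' + d^4*l5 + -15*d^4*η*l9 + 5*d^4*η^2*γ + (-1/3)*d^4*ξ + c*d^2*l8 + -2*c*d^2*η^2 + (-2/3)*c*d^2*ξ*γ + c^2*η*l9 + (-1/3)*c^2*η^2*γ + c^2*ξ + (-4/3)*b*d^3*η + 2*b*c*d*l9 + (-4/3)*b*c*d*η*γ + (-1/3)*b^2*d^2*γ + b^2*c = 0 := by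
    linear_combination ((7/18) : ℝ) * H0 0 + ((-13/48) : ℝ) * H0 1 + ((-13/48) : ℝ) * H0 (-1) + ((1/12) : ℝ) * H0 2 + ((1/12) : ℝ) * H0 (-2) + ((-1/144) : ℝ) * H0 3 + ((-1/144) : ℝ) * H0 (-3)
  have E05 : 3*l9' + -3*d^5*l9 + 2*d^5*η*γ + (-4/3)*c*d^3*η + c^2*d*l9 + (-2/3)*c^2*d*η*γ + (-1/3)*b*d^4 + (-2/3)*b*c*d^2*γ + b*c^2 = 0 := by
    linear_combination ((1/48) : ℝ) * H0 1 + ((-1/48) : ℝ) * H0 (-1) + ((-1/60) : ℝ) * H0 2 + ((1/60) : ℝ) * H0 (-2) + ((1/240) : ℝ) * H0 3 + ((-1/240) : ℝ) * H0 (-3)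
  have E06 : (-1/3)*γ' + (1/3)*d^6*γ + (-1/3)*c*d^4 + (-1/3)*c^2*d^2*γ + (1/3)*c^3 = 0 := by
    linear_combination ((-1/36) : ℝ) * H0 0 + ((1/48) : ℝ) * H0 1 + ((1/48) : ℝ) * H0 (-1) + ((-1/120) : ℝ) * H0 2 + ((-1/120) : ℝ) * H0 (-2) + ((1/720) : ℝ) * H0 3 + ((1/720) : ℝ) * H0 (-3)
  -- a = 1
  have ha3 : (a - 1) * (a ^ 2 + a + 1) = 0 := by linear_combination (3 : ℝ) * E30
  have hapos : 0 < a ^ 2 + a + 1 := by linarith only [sq_nonneg (2 * a + 1), sq_nonneg a]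
  have ha1 : a = 1 := by
    rcases mul_eq_zero.1 ha3 with h' | h'
    · linarith only [h']
    · linarith only [h', hapos]
  subst ha1
  -- root-matching for the cubic part
  obtain ⟨hg1, hg2⟩ := hγ
  obtain ⟨hg1', hg2'⟩ := hγ'
  have hd2 : 0 < d ^ 2 := by positivity
  have hqr : -d ^ 2 - c < γ * d ^ 2 - c := by
    have h1 : 0 < (1 + γ) * d ^ 2 := mul_pos (by linarith only [hg1]) hd2
    nlinarith only [h1]
  have hrp : γ * d ^ 2 - c < d ^ 2 - c := by
    have h1 : 0 < (1 - γ) * d ^ 2 := mul_pos (by linarith only [hg2]) hd2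
    nlinarith only [h1]
  have hp : (d ^ 2 - c - 1) * (d ^ 2 - c + 1) * (d ^ 2 - c - γ') = 0 := by
    linear_combination (-3 * (d ^ 2 - c) ^ 2) * E22 + (-3 * (d ^ 2 - c)) * E14 + (-3 : ℝ) * E06
  have hq : (-d ^ 2 - c - 1) * (-d ^ 2 - c + 1) * (-d ^ 2 - c - γ') = 0 := by
    linear_combination (-3 * (-d ^ 2 - c) ^ 2) * E22 + (-3 * (-d ^ 2 - c)) * E14 + (-3 : ℝ) * E06
  have hr : (γ * d ^ 2 - c - 1) * (γ * d ^ 2 - c + 1) * (γ * d ^ 2 - c - γ') = 0 := by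
    linear_combination (-3 * (γ * d ^ 2 - c) ^ 2) * E22 + (-3 * (γ * d ^ 2 - c)) * E14 + (-3 : ℝ) * E06
  have hp3 : d ^ 2 - c = 1 ∨ d ^ 2 - c = -1 ∨ d ^ 2 - c = γ' := by
    rcases mul_eq_zero.1 hp with h' | h'
    · rcases mul_eq_zero.1 h' with h'' | h''
      · exact Or.inl (by linarith only [h''])
      · exact Or.inr (Or.inl (by linarith only [h'']))
    · exact Or.inr (Or.inr (by linarith only [h']))
  have hq3 : -d ^ 2 - c = 1 ∨ -d ^ 2 - c = -1 ∨ -d ^ 2 - c = γ' := by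
    rcases mul_eq_zero.1 hq with h' | h'
    · rcases mul_eq_zero.1 h' with h'' | h''
      · exact Or.inl (by linarith only [h''])
      · exact Or.inr (Or.inl (by linarith only [h'']))
    · exact Or.inr (Or.inr (by linarith only [h']))
  have hr3 : γ * d ^ 2 - c = 1 ∨ γ * d ^ 2 - c = -1 ∨ γ * d ^ 2 - c = γ' := by
    rcases mul_eq_zero.1 hr with h' | h'
    · rcases mul_eq_zero.1 h' with h'' | h''
      · exact Or.inl (by linarith only [h''])
      · exact Or.inr (Or.inl (by linarith only [h'']))
    · exact Or.inr (Or.inr (by linarith only [h']))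
  have hP : d ^ 2 - c = 1 := by
    rcases hp3 with h1 | h1 | h1
    · exact h1
    · rcases hq3 with h2 | h2 | h2 <;> linarith only [h1, h2, hqr, hrp, hg1', hg2']
    · rcases hq3 with h2 | h2 | h2
      · linarith only [h1, h2, hqr, hrp, hg2']
      · rcases hr3 with h3 | h3 | h3 <;> linarith only [h1, h2, h3, hqr, hrp, hg1', hg2']
      · rcases hr3 with h3 | h3 | h3 <;> linarith only [h1, h2, h3, hqr, hrp, hg1', hg2']
  have hQ : -d ^ 2 - c = -1 := by
    rcases hq3 with h2 | h2 | h2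
    · linarith only [h2, hP, hqr, hrp]
    · exact h2
    · rcases hr3 with h3 | h3 | h3 <;> linarith only [h2, h3, hP, hqr, hrp, hg1', hg2']
  have hc : c = 0 := by linarith only [hP, hQ]
  subst hc
  have hd1 : d = 1 := by nlinarith only [hd, hP, sq_nonneg (d - 1)]
  subst hd1
  have hR : γ' = γ := by
    rcases hr3 with h3 | h3 | h3 <;> linarith only [h3, hP, hQ, hqr, hrp, hg1, hg2]
  subst hR
  have hb : b = 0 := by linarith only [E21, E05]
  subst hb
  have hη : η = 0 := by linarith only [E13]
  subst hη
  have hξ : ξ = 0 := by linarith only [E20]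
  subst hξ
  refine ⟨rfl, rfl, rfl, rfl, rfl, rfl, ?_, rfl, ?_, ?_, ?_, ?_, ?_, ?_, ?_, ?_, ?_⟩
  · intro x y; simp
  · linarith only [E00]
  · linarith only [E01]
  · linarith only [E02]
  · linarith only [E03]
  · linarith only [E04]
  · linarith only [E10]
  · linarith only [E11]
  · linarith only [E12]
  · linarith only [E21]
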